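/- Let conflict : ℝ → ℝ → Prop be shift-invariant (for all s t Δ ≥ 0, conflict s t → conflict (s+Δ) (t+Δ)). Assume for all t ∈ [t_i, t_i^u), conflict t t_j, and for all t ∈ [t_j, t_j^u), conflict t_i t, with t_i^u > t_i and t_j^u > t_j. If Δ_i ∈ (0, t_i^u - t_i], Δ_j ∈ (0, t_j^u - t_j], and ¬ conflict (t_i + Δ_i) (t_j + Δ_j), then both Δ_i < Δ_j and Δ_j < Δ_i hold, a contradiction; hence no such Δ_i, Δ_j exist. -/
import Mathlib

/-- The contradiction step in the proof of the CCBS sound-pair lemma: a conflict-free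
pair of delays within the respective unsafe intervals would force both `Δi < Δj` and
`Δj < Δi`. -/
theorem ccbs_sound_pair_contradiction
    (conflict : ℝ → ℝ → Prop) (ti tj tiu tju : ℝ)
    (hti : ti < tiu) (htj : tj < tju)
    (hshift : ∀ s t Δ : ℝ, 0 ≤ Δ → conflict s t → conflict (s + Δ) (t + Δ))
    (hi : ∀ t : ℝ, ti ≤ t → t < tiu → conflict t tj)
    (hj : ∀ t : ℝ, tj ≤ t → t < tju → conflict ti t)
    (Δi Δj : ℝ) (hΔi : 0 < Δi ∧ Δi ≤ tiu - ti) (hΔj : 0 < Δj ∧ Δj ≤ tju - tj)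
    (hnoc : ¬ conflict (ti + Δi) (tj + Δj)) :
    Δi < Δj ∧ Δj < Δi := by
  obtain ⟨hΔi0, hΔi1⟩ := hΔi
  obtain ⟨hΔj0, hΔj1⟩ := hΔj
  constructor
  · by_contra h
    push_neg at h
    have hc : conflict (ti + Δi - Δj) tj := hi _ (by linarith) (by linarith)
    have := hshift _ _ Δj (le_of_lt hΔj0) hc
    exact hnoc (by simpa using this)
  · by_contra h
    push_neg at h
    have hc : conflict ti (tj + Δj - Δi) := hj _ (by linarith) (by linarith)
    have := hshift _ _ Δi (le_of_lt hΔi0) hc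
    exact hnoc (by simpa using this)
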